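/- Let (a/b, c/d) be reduced fractions with d_F = |ad−bc|, gcd(b,d)=1, the pair inner regular (gcd(ab+cd,b²+d²,a²+c²)=d_F), b | a²+1 and d | c²+1. Set r = (ab+cd)/d_F and s = (b²+d²)/d_F. Then s divides r²+1. -/

import Mathlib

/-- For an inner regular pair (a/b, c/d) with gcd(b,d)=1, b ∣ a²+1, d ∣ c²+1,
setting r = (ab+cd)/d_F and s = (b²+d²)/d_F, one has s ∣ r²+1. -/
theorem stmt_7 (a b c d r s : ℤ) (hb : 0 < b) (hd : 0 < d)
    (hab : Int.gcd a b = 1) (hcd : Int.gcd c d = 1) (hbd : Int.gcd b d = 1)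
    (hne : a*d - b*c ≠ 0)
    (hreg : Int.gcd (a*b + c*d) (Int.gcd (b^2 + d^2) (a^2 + c^2)) = (a*d - b*c).natAbs)
    (hba : b ∣ a^2 + 1) (hdc : d ∣ c^2 + 1)
    (hr : a*b + c*d = ((a*d - b*c).natAbs : ℤ) * r)
    (hs : b^2 + d^2 = ((a*d - b*c).natAbs : ℤ) * s) :
    s ∣ r^2 + 1 := by
  set D : ℤ := ((a*d - b*c).natAbs : ℤ) with hDdef
  have hD : D ≠ 0 := by
    simpa [hDdef] using Int.natAbs_ne_zero.mpr hne
  -- D divides a^2 + c^2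
  have hdvd : D ∣ a^2 + c^2 := by
    rw [hDdef, ← hreg]
    exact dvd_trans (Int.gcd_dvd_right _ _) (Int.gcd_dvd_right _ _)
  obtain ⟨t, ht⟩ := hdvd
  have hsq : D^2 = (a*d - b*c)^2 := by
    rw [hDdef]; exact Int.natAbs_sq _
  have key : D^2 * (r^2 + 1) = D^2 * (s * t) := by
    have hident : (a*b + c*d)^2 + (a*d - b*c)^2 = (a^2 + c^2) * (b^2 + d^2) := by ring
    rw [hr, ht, hs] at hident
    nlinarith [hident, hsq]
  have := mul_left_cancel₀ (pow_ne_zero 2 hD) key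
  exact ⟨t, this⟩
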